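/- For 2 < α, β ≤ ω, a poset P is (α,β)-representable if and only if there is a distributive lattice L and an (α,β)-embedding e : P → L. -/

import Mathlib

open Cardinal

/-- `h : P → ℘(X)` is an `(α,β)`-representation. -/
def IsRep {P : Type u} [PartialOrder P] {X : Type u} (α β : Cardinal.{u})
    (h : P → Set X) : Prop :=
  (∀ p q : P, p ≤ q ↔ h p ⊆ h q) ∧
  (∀ S : Set P, S.Nonempty → #S < α → ∀ m, IsGLB S m → h m = ⋂ s ∈ S, h s) ∧
  (∀ S : Set P, S.Nonempty → #S < β → ∀ j, IsLUB S j → h j = ⋃ s ∈ S, h s)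

/-- `e : P → L` is an `(α,β)`-embedding: an order embedding such that existing meets of
nonempty sets of size `< α` and existing joins of nonempty sets of size `< β` are
preserved (the image of the meet/join is the meet/join of the images). -/
def IsABEmbedding {P : Type u} [PartialOrder P] {L : Type u} [PartialOrder L]
    (α β : Cardinal.{u}) (e : P → L) : Prop :=
  (∀ p q : P, p ≤ q ↔ e p ≤ e q) ∧
  (∀ S : Set P, S.Nonempty → #S < α → ∀ m, IsGLB S m → IsGLB (e '' S) (e m)) ∧
  (∀ S : Set P, S.Nonempty → #S < β → ∀ j, IsLUB S j → IsLUB (e '' S) (e j))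

section Aux
open Order

variable {L : Type u} [DistribLattice L]

/-- Embed `L` into a bounded distributive lattice. -/
def toL' (a : L) : WithBot (WithTop L) := ((a : WithTop L) : WithBot (WithTop L))

lemma toL'_le {a b : L} : toL' a ≤ toL' b ↔ a ≤ b := by simp [toL']

lemma toL'_inf (a b : L) : toL' (a ⊓ b) = toL' a ⊓ toL' b := by
  simp [toL', ← WithTop.coe_inf, ← WithBot.coe_inf]

lemma toL'_sup (a b : L) : toL' (a ⊔ b) = toL' a ⊔ toL' b := by
  simp [toL', ← WithTop.coe_sup, ← WithBot.coe_sup]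

/-- Map to the powerset of prime ideals. -/
def primeRep (a : L) : Set {J : Order.Ideal (WithBot (WithTop L)) // J.IsPrime} :=
  {J | toL' a ∉ J.1}

lemma primeRep_subset {a b : L} : a ≤ b ↔ primeRep a ⊆ primeRep b := by
  constructor
  · intro hab J hJ hb
    exact hJ (J.1.lower (toL'_le.2 hab) hb)
  · intro hsub
    by_contra hab
    have hdisj : Disjoint ((PFilter.principal (toL' a) : PFilter _) : Set (WithBot (WithTop L)))
        ((Order.Ideal.principal (toL' b) : Order.Ideal _) : Set (WithBot (WithTop L))) := by
      rw [Set.disjoint_left]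
      intro x hx hx'
      exact hab (toL'_le.1 (le_trans (PFilter.mem_principal.1 hx) (Ideal.mem_principal.1 hx')))
    obtain ⟨J, hJp, hIJ, hFJ⟩ := DistribLattice.prime_ideal_of_disjoint_filter_ideal hdisj
    have haJ : toL' a ∉ J := Set.disjoint_left.1 hFJ (PFilter.mem_principal.2 le_rfl)
    have hbJ : toL' b ∈ J := hIJ Ideal.mem_principal_self
    exact (hsub (show (⟨J, hJp⟩ : {J : Order.Ideal _ // J.IsPrime}) ∈ primeRep a from haJ)) hbJ

lemma primeRep_inf (a b : L) : primeRep (a ⊓ b) = primeRep a ∩ primeRep b := by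
  ext J
  simp only [primeRep, Set.mem_setOf_eq, Set.mem_inter_iff, toL'_inf]
  constructor
  · intro h
    constructor
    · intro ha; exact h (J.1.lower inf_le_left ha)
    · intro hb; exact h (J.1.lower inf_le_right hb)
  · rintro ⟨ha, hb⟩ h
    rcases J.2.mem_or_mem h with h' | h' <;> [exact ha h'; exact hb h']

lemma primeRep_sup (a b : L) : primeRep (a ⊔ b) = primeRep a ∪ primeRep b := by
  ext J
  simp only [primeRep, Set.mem_setOf_eq, Set.mem_union, toL'_sup]
  rw [Ideal.sup_mem_iff]
  tauto

lemma primeRep_inf' (s : Finset L) (hs : s.Nonempty) :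
    primeRep (s.inf' hs id) = ⋂ t ∈ s, primeRep t := by
  induction hs using Finset.Nonempty.cons_induction with
  | singleton a => simp
  | cons a s ha hs ih =>
      rw [Finset.inf'_cons (H := hs), primeRep_inf, ih]
      simp [Set.biInter_insert]

lemma primeRep_sup' (s : Finset L) (hs : s.Nonempty) :
    primeRep (s.sup' hs id) = ⋃ t ∈ s, primeRep t := by
  induction hs using Finset.Nonempty.cons_induction with
  | singleton a => simp
  | cons a s ha hs ih =>
      rw [Finset.sup'_cons (H := hs), primeRep_sup, ih]
      simp [Set.biUnion_insert]

lemma primeRep_isGLB {T : Set L} (hfin : T.Finite) (hne : T.Nonempty) {c : L}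
    (hc : IsGLB T c) : primeRep c = ⋂ t ∈ T, primeRep t := by
  have hne' : hfin.toFinset.Nonempty := by simpa [Set.Finite.toFinset_nonempty] using hne
  have hglb : IsGLB T (hfin.toFinset.inf' hne' id) := by
    constructor
    · intro t ht
      exact Finset.inf'_le _ (hfin.mem_toFinset.2 ht)
    · intro x hx
      exact Finset.le_inf' _ _ fun t ht => hx (hfin.mem_toFinset.1 ht)
  rw [hc.unique hglb, primeRep_inf']
  ext J; simp [Set.Finite.mem_toFinset]

lemma primeRep_isLUB {T : Set L} (hfin : T.Finite) (hne : T.Nonempty) {c : L}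
    (hc : IsLUB T c) : primeRep c = ⋃ t ∈ T, primeRep t := by
  have hne' : hfin.toFinset.Nonempty := by simpa [Set.Finite.toFinset_nonempty] using hne
  have hlub : IsLUB T (hfin.toFinset.sup' hne' id) := by
    constructor
    · intro t ht
      exact Finset.le_sup' (f := id) (hfin.mem_toFinset.2 ht)
    · intro x hx
      exact Finset.sup'_le _ _ fun t ht => hx (hfin.mem_toFinset.1 ht)
  rw [hc.unique hlub, primeRep_sup']
  ext J; simp [Set.Finite.mem_toFinset]

end Aux

/-- For `2 < α, β ≤ ω`, a poset `P` is `(α,β)`-representable iff there is a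
distributive lattice `L` and an `(α,β)`-embedding `e : P → L`. -/
theorem representable_iff_embeds_in_distrib_lattice {P : Type u} [PartialOrder P]
    (α β : Cardinal.{u}) (hα : 2 < α) (hβ : 2 < β) (hα' : α ≤ ℵ₀) (hβ' : β ≤ ℵ₀) :
    (∃ (X : Type u) (h : P → Set X), IsRep α β h) ↔
    (∃ (L : Type u) (_ : DistribLattice L) (e : P → L), IsABEmbedding α β e) := by
  constructor
  · rintro ⟨X, h, h1, h2, h3⟩
    refine ⟨Set X, inferInstance, h, h1, ?_, ?_⟩
    · intro S hS hcard m hm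
      rw [h2 S hS hcard m hm]
      have : ⋂ s ∈ S, h s = sInf (h '' S) := by
        rw [Set.sInf_eq_sInter, Set.sInter_image]
      rw [this]
      exact isGLB_sInf _
    · intro S hS hcard j hj
      rw [h3 S hS hcard j hj]
      have : ⋃ s ∈ S, h s = sSup (h '' S) := by
        rw [Set.sSup_eq_sUnion, Set.sUnion_image]
      rw [this]
      exact isLUB_sSup _
  · rintro ⟨L, _, e, he1, he2, he3⟩
    refine ⟨{J : Order.Ideal (WithBot (WithTop L)) // J.IsPrime}, fun p => primeRep (e p),
      ?_, ?_, ?_⟩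
    · intro p q
      exact (he1 p q).trans primeRep_subset
    · intro S hS hcard m hm
      have hfin : S.Finite := Cardinal.lt_aleph0_iff_set_finite.1 (hcard.trans_le hα')
      show primeRep (e m) = ⋂ s ∈ S, primeRep (e s)
      rw [primeRep_isGLB (hfin.image e) (hS.image e) (he2 S hS hcard m hm)]
      exact Set.biInter_image
    · intro S hS hcard j hj
      have hfin : S.Finite := Cardinal.lt_aleph0_iff_set_finite.1 (hcard.trans_le hβ')
      show primeRep (e j) = ⋃ s ∈ S, primeRep (e s)
      rw [primeRep_isLUB (hfin.image e) (hS.image e) (he3 S hS hcard j hj)]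
      exact Set.biUnion_image
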